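/- Redundancy coefficient of the nested array: Let P ≥ 4 and consider the nested array 𝕊 = 𝕊^{(N₁,N₂)} with N₁ = ⌈P/2⌉ and N₂ = ⌊P/2⌋ ≥ 2, i.e., 𝕊 = {1, …, N₁} ∪ {m(N₁+1) : 1 ≤ m ≤ N₂}. Then its redundancy coefficient satisfies P²/16 ≤ Δ(𝕊) ≤ P². -/

import Mathlib

noncomputable section

/-- Weight function of a sparse array given as a finite set of distinct integers:
`|Ω_i| = #{(a,b) ∈ 𝕊 × 𝕊 : a - b = i}`. -/
def fweight (A : Finset ℤ) (i : ℤ) : ℕ :=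
  ((A ×ˢ A).filter (fun p => p.1 - p.2 = i)).card

/-- The generalized nested array `𝕊^{(N₁,N₂)} = {1,…,N₁} ∪ {m(N₁+1) : 1 ≤ m ≤ N₂}`. -/
def nestedArray (N₁ N₂ : ℕ) : Finset ℤ :=
  Finset.Icc (1 : ℤ) (N₁ : ℤ) ∪ (Finset.Icc (1 : ℤ) (N₂ : ℤ)).image (fun m => m * ((N₁ : ℤ) + 1))

end

open Finset

lemma nested_bounds (N₁ N₂ : ℕ) (h : 1 ≤ N₂) {x : ℤ} (hx : x ∈ nestedArray N₁ N₂) :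
    1 ≤ x ∧ x ≤ (N₂ : ℤ) * (N₁ + 1) := by
  have hN2 : (1 : ℤ) ≤ N₂ := by exact_mod_cast h
  rcases Finset.mem_union.1 hx with h1 | h2
  · rw [Finset.mem_Icc] at h1
    constructor
    · exact h1.1
    · nlinarith [h1.2]
  · obtain ⟨m, hm, rfl⟩ := Finset.mem_image.1 h2
    rw [Finset.mem_Icc] at hm
    constructor
    · nlinarith [hm.1]
    · nlinarith [hm.2, hm.1]

lemma nested_card (N₁ N₂ : ℕ) : (nestedArray N₁ N₂).card = N₁ + N₂ := by
  rw [nestedArray, Finset.card_union_of_disjoint, Int.card_Icc,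
    Finset.card_image_of_injective _ (mul_left_injective₀ (by positivity : ((N₁:ℤ)+1) ≠ 0)),
    Int.card_Icc]
  · omega
  · rw [Finset.disjoint_left]
    rintro a ha hb
    rw [Finset.mem_Icc] at ha
    obtain ⟨m, hm, rfl⟩ := Finset.mem_image.1 hb
    rw [Finset.mem_Icc] at hm
    nlinarith [ha.2, hm.1]

lemma nested_holefree (N₁ N₂ : ℕ) (h : 1 ≤ N₂) (i : ℕ) (hi : i < N₂ * (N₁ + 1)) :
    1 ≤ fweight (nestedArray N₁ N₂) (i : ℤ) := by
  set q := i / (N₁ + 1) with hq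
  set r := i % (N₁ + 1) with hr
  have hdm : (N₁ + 1) * q + r = i := Nat.div_add_mod i (N₁ + 1)
  have hrlt : r < N₁ + 1 := Nat.mod_lt _ (by omega)
  have hqlt : q < N₂ := by
    rw [hq, Nat.div_lt_iff_lt_mul (by omega)]
    omega
  have hamem : ((q : ℤ) + 1) * ((N₁ : ℤ) + 1) ∈ nestedArray N₁ N₂ := by
    apply Finset.mem_union_right
    apply Finset.mem_image.2
    exact ⟨(q : ℤ) + 1, Finset.mem_Icc.2 ⟨by linarith [Int.natCast_nonneg q], by exact_mod_cast hqlt⟩, rfl⟩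
  have hbmem : ((N₁ : ℤ) + 1 - r) ∈ nestedArray N₁ N₂ := by
    rcases Nat.eq_zero_or_pos r with h0 | hpos
    · apply Finset.mem_union_right
      apply Finset.mem_image.2
      refine ⟨1, Finset.mem_Icc.2 ⟨le_refl _, by exact_mod_cast h⟩, by rw [h0]; push_cast; ring⟩
    · apply Finset.mem_union_left
      rw [Finset.mem_Icc]
      constructor
      · have : (r : ℤ) < (N₁ : ℤ) + 1 := by exact_mod_cast hrlt
        omega
      · have : (1 : ℤ) ≤ r := by exact_mod_cast hpos
        omega
  rw [fweight, Nat.one_le_iff_ne_zero, ← Nat.pos_iff_ne_zero, Finset.card_pos]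
  refine ⟨(((q : ℤ) + 1) * ((N₁ : ℤ) + 1), (N₁ : ℤ) + 1 - r), Finset.mem_filter.2 ⟨Finset.mem_product.2 ⟨hamem, hbmem⟩, ?_⟩⟩
  have : ((N₁ : ℤ) + 1) * q + r = i := by exact_mod_cast hdm
  push_cast
  nlinarith [this]

lemma sum_fweight (N₁ N₂ : ℕ) (h : 1 ≤ N₂) :
    2 * (∑ i ∈ Finset.range (N₂ * (N₁ + 1)), fweight (nestedArray N₁ N₂) (i : ℤ)) =
    (N₁ + N₂) ^ 2 + (N₁ + N₂) := by
  set S := nestedArray N₁ N₂ with hS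
  set T := (S ×ˢ S).filter (fun p => p.2 ≤ p.1) with hT
  set U := (S ×ˢ S).filter (fun p => p.1 < p.2) with hU
  set V := (S ×ˢ S).filter (fun p => p.2 < p.1) with hV
  have hbd : ∀ x ∈ S, 1 ≤ x ∧ x ≤ (N₂ : ℤ) * (N₁ + 1) := fun x hx => nested_bounds N₁ N₂ h hx
  -- step 1: sum = T.card
  have step1 : ∑ i ∈ Finset.range (N₂ * (N₁ + 1)), fweight S (i : ℤ) = T.card := by
    rw [Finset.card_eq_sum_card_fiberwise
      (f := fun p : ℤ × ℤ => (p.1 - p.2).toNat) (t := Finset.range (N₂ * (N₁ + 1)))]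
    · apply Finset.sum_congr rfl
      intro i _
      rw [fweight]
      congr 1
      ext ⟨a, b⟩
      simp only [hT, Finset.mem_filter, Finset.mem_product, and_assoc, Int.ofNat_eq_natCast]
      constructor
      · rintro ⟨ha, hb, hcond⟩; exact ⟨ha, hb, by omega, by omega⟩
      · rintro ⟨ha, hb, h1, h2⟩; exact ⟨ha, hb, by omega⟩
    · rintro ⟨a, b⟩ hp
      rw [hT, Finset.mem_coe, Finset.mem_filter, Finset.mem_product] at hp
      obtain ⟨⟨ha, hb⟩, hle⟩ := hp
      have h1 := hbd a ha
      have h2 := hbd b hb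
      rw [Finset.mem_coe, Finset.mem_range]
      show (a - b).toNat < N₂ * (N₁ + 1)
      have : ((N₂ * (N₁ + 1) : ℕ) : ℤ) = (N₂ : ℤ) * (N₁ + 1) := by push_cast; ring
      omega
  -- card facts
  have hcard : S.card = N₁ + N₂ := nested_card N₁ N₂
  have hUT : U.card + T.card = (N₁ + N₂) ^ 2 := by
    have := Finset.card_filter_add_card_filter_not
      (s := S ×ˢ S) (p := fun p => p.1 < p.2)
    have hTeq : (S ×ˢ S).filter (fun p => ¬ p.1 < p.2) = T := by
      apply Finset.filter_congr; intro p _; simp [not_lt]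
    rw [hTeq] at this
    rw [hU, this, Finset.card_product, hcard]; ring
  have hUV : U.card = V.card := by
    apply Finset.card_bij (fun p _ => Prod.swap p)
    · rintro ⟨a, b⟩ hp
      rw [hU, Finset.mem_filter, Finset.mem_product] at hp
      rw [hV, Finset.mem_filter, Finset.mem_product]
      exact ⟨⟨hp.1.2, hp.1.1⟩, hp.2⟩
    · rintro ⟨a, b⟩ _ ⟨c, d⟩ _ hvw
      exact Prod.swap_injective hvw
    · rintro ⟨a, b⟩ hp
      rw [hV, Finset.mem_filter, Finset.mem_product] at hp
      exact ⟨(b, a), by rw [hU, Finset.mem_filter, Finset.mem_product]; exact ⟨⟨hp.1.2, hp.1.1⟩, hp.2⟩, rfl⟩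
  have hVD : V.card + S.card = T.card := by
    have := Finset.card_filter_add_card_filter_not
      (s := T) (p := fun p => p.2 < p.1)
    have h1 : T.filter (fun p => p.2 < p.1) = V := by
      rw [hT, hV, Finset.filter_filter]
      apply Finset.filter_congr; intro p _
      constructor
      · rintro ⟨_, h2⟩; exact h2
      · intro h1; omega
    have h2 : (T.filter (fun p => ¬ p.2 < p.1)).card = S.card := by
      have hD : T.filter (fun p => ¬ p.2 < p.1) = S.image (fun a => (a, a)) := by
        ext ⟨a, b⟩
        rw [hT, Finset.filter_filter, Finset.mem_filter, Finset.mem_product, Finset.mem_image]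
        constructor
        · rintro ⟨⟨ha, hb⟩, hle, hnlt⟩
          exact ⟨a, ha, by simp; omega⟩
        · rintro ⟨c, hc, hcab⟩
          simp at hcab
          obtain ⟨rfl, rfl⟩ := hcab
          exact ⟨⟨hc, hc⟩, le_refl _, lt_irrefl _⟩
      rw [hD, Finset.card_image_of_injective _ (fun x y hxy => by simpa [Prod.ext_iff] using hxy)]
    rw [h1, h2] at this
    exact this
  rw [step1]
  omega

/-- **Redundancy coefficient of the nested array** (Lemma 3, Case II): for `P ≥ 4`,
`N₁ = ⌈P/2⌉`, `N₂ = ⌊P/2⌋ ≥ 2`, the redundancy coefficient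
`Δ(𝕊) = Σ_{i=0}^{Mca} 1/|Ω_i|` (with `Mca = N₂(N₁+1) - 1`) satisfies
`P²/16 ≤ Δ(𝕊) ≤ P²`. -/
theorem nested_redundancy_coefficient (P N₁ N₂ Mca : ℕ) (hP : 4 ≤ P)
    (hN₁ : N₁ = (P + 1) / 2) (hN₂ : N₂ = P / 2) (hMca : Mca = N₂ * (N₁ + 1) - 1) :
    (P : ℝ) ^ 2 / 16 ≤
        ∑ i ∈ Finset.range (Mca + 1), (1 : ℝ) / (fweight (nestedArray N₁ N₂) (i : ℤ)) ∧
    ∑ i ∈ Finset.range (Mca + 1), (1 : ℝ) / (fweight (nestedArray N₁ N₂) (i : ℤ)) ≤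
        (P : ℝ) ^ 2 := by
  have hN2 : 2 ≤ N₂ := by omega
  have hN1 : 2 ≤ N₁ := by omega
  have hPsum : P = N₁ + N₂ := by omega
  have hpar : N₁ = N₂ ∨ N₁ = N₂ + 1 := by omega
  have hn : Mca + 1 = N₂ * (N₁ + 1) := by
    have : 1 ≤ N₂ * (N₁ + 1) := Nat.one_le_iff_ne_zero.2 (by positivity)
    omega
  set n := N₂ * (N₁ + 1) with hndef
  set W : ℕ → ℝ := fun i => (fweight (nestedArray N₁ N₂) (i : ℤ) : ℝ) with hW
  have hWpos : ∀ i ∈ Finset.range n, (0 : ℝ) < W i := by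
    intro i hi
    rw [Finset.mem_range] at hi
    have := nested_holefree N₁ N₂ (by omega) i hi
    show (0 : ℝ) < (fweight (nestedArray N₁ N₂) (i : ℤ) : ℝ)
    exact_mod_cast this
  have hsumW : ∑ i ∈ Finset.range n, W i = ((P : ℝ) ^ 2 + P) / 2 := by
    have hc := congrArg (fun m : ℕ => (m : ℝ)) (sum_fweight N₁ N₂ (by omega))
    push_cast at hc
    simp only [hW]
    rw [hPsum]
    push_cast
    linarith [hc]
  rw [hn]
  constructor
  · -- lower bound via Sedrakyan
    have key : (∑ i ∈ Finset.range n, (1:ℝ)) ^ 2 / ∑ i ∈ Finset.range n, W i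
        ≤ ∑ i ∈ Finset.range n, (1:ℝ) ^ 2 / W i :=
      Finset.sq_sum_div_le_sum_sq_div (Finset.range n) (fun _ => (1:ℝ)) hWpos
    simp only [one_pow] at key
    rw [Finset.sum_const, Finset.card_range, nsmul_eq_mul, mul_one] at key
    have hineq : (P : ℝ) ^ 2 / 16 ≤ (n : ℝ) ^ 2 / ∑ i ∈ Finset.range n, W i := by
      rw [hsumW]
      rw [div_le_div_iff₀ (by norm_num) (by positivity)]
      have hnat : P ^ 2 * (P ^ 2 + P) ≤ 32 * n ^ 2 := by
        rw [hPsum, hndef]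
        rcases hpar with h | h <;> subst h <;> nlinarith [hN2]
      calc (P:ℝ)^2 * (((P:ℝ)^2 + P)/2) = (P^2 * (P^2+P) : ℕ) / 2 := by push_cast; ring
        _ ≤ (32 * n^2 : ℕ) / 2 := by
            apply div_le_div_of_nonneg_right _ (by norm_num)
            exact_mod_cast hnat
        _ = (n:ℝ)^2 * 16 := by push_cast; ring
    calc (P : ℝ) ^ 2 / 16 ≤ (n : ℝ) ^ 2 / ∑ i ∈ Finset.range n, W i := hineq
      _ ≤ ∑ i ∈ Finset.range n, 1 / W i := key
  · -- upper bound
    have h1 : ∑ i ∈ Finset.range n, (1:ℝ) / W i ≤ ∑ i ∈ Finset.range n, (1:ℝ) := by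
      apply Finset.sum_le_sum
      intro i hi
      have hpos := hWpos i hi
      have : (1 : ℝ) ≤ W i := by
        rw [Finset.mem_range] at hi
        have := nested_holefree N₁ N₂ (by omega) i hi
        show (1 : ℝ) ≤ (fweight (nestedArray N₁ N₂) (i : ℤ) : ℝ)
        exact_mod_cast this
      rw [div_le_one hpos]; exact this
    rw [Finset.sum_const, Finset.card_range, nsmul_eq_mul, mul_one] at h1
    have h2 : (n : ℝ) ≤ (P : ℝ) ^ 2 := by
      have : n ≤ P ^ 2 := by
        rw [hndef, hPsum]; nlinarith [hN1, hN2]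
      exact_mod_cast this
    linarith
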